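/- arXiv:2504.14351 — 11 statements merged into one kernel-verified Lean document; each statement's English description precedes it below -/
import Mathlib

section
/- Let m be a positive natural number and s : Fin m → ℝ be a function with s i > 0 for all i, sorted in decreasing order (i.e., i ≤ j implies s i ≥ s j). Then for every k ≤ m, (∑_{i < k} Real.sqrt (s i)) · (∑_{i} s i) ≤ (∑_{i < k} s i) · (∑_{i} Real.sqrt (s i)). Equivalently, the cumulative share of total weight held by the k largest validators under square-root stake weights is at most their share under linear stake weights. -/
open Finset

/-- Lorenz dominance of square-root stake weights over linear stake weights:
for stakes `s` sorted in decreasing order, the cumulative share of total weight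
of the top `k` validators under `√` weights is at most that under linear weights. -/
theorem srsw_lorenz_dominance (m : ℕ) (hm : 0 < m) (s : Fin m → ℝ)
    (hs : ∀ i, 0 < s i)
    (hsorted : ∀ i j : Fin m, i ≤ j → s j ≤ s i) :
    ∀ k : ℕ, k ≤ m →
      (∑ i ∈ univ.filter (fun i : Fin m => (i : ℕ) < k), Real.sqrt (s i)) * (∑ i, s i) ≤
        (∑ i ∈ univ.filter (fun i : Fin m => (i : ℕ) < k), s i) * (∑ i, Real.sqrt (s i)) := by
  intro k hk
  set A := univ.filter (fun i : Fin m => (i : ℕ) < k) with hA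
  set B := univ.filter (fun i : Fin m => ¬ (i : ℕ) < k) with hB
  have hsplit : ∀ f : Fin m → ℝ, ∑ i, f i = ∑ i ∈ A, f i + ∑ i ∈ B, f i := by
    intro f
    rw [hA, hB, sum_filter_add_sum_filter_not]
  have key : (∑ i ∈ A, Real.sqrt (s i)) * (∑ j ∈ B, s j) ≤
      (∑ i ∈ A, s i) * (∑ j ∈ B, Real.sqrt (s j)) := by
    rw [Finset.sum_mul_sum, Finset.sum_mul_sum]
    apply Finset.sum_le_sum
    intro i hi
    apply Finset.sum_le_sum
    intro j hj
    have hik : (i : ℕ) < k := (mem_filter.mp hi).2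
    have hjk : ¬ (j : ℕ) < k := (mem_filter.mp hj).2
    have hij : i ≤ j := by
      have : (i : ℕ) ≤ (j : ℕ) := le_trans hik.le (not_lt.mp hjk)
      exact Fin.le_def.mpr this
    have hsj : s j ≤ s i := hsorted i j hij
    have h1 : Real.sqrt (s j) ≤ Real.sqrt (s i) := Real.sqrt_le_sqrt hsj
    have h2 : Real.sqrt (s i) * Real.sqrt (s i) = s i := Real.mul_self_sqrt (hs i).le
    have h3 : Real.sqrt (s j) * Real.sqrt (s j) = s j := Real.mul_self_sqrt (hs j).le
    have h4 : (0:ℝ) ≤ Real.sqrt (s i) := Real.sqrt_nonneg _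
    have h5 : (0:ℝ) ≤ Real.sqrt (s j) := Real.sqrt_nonneg _
    have h6 := mul_le_mul_of_nonneg_left h1 (mul_nonneg h4 h5)
    nlinarith [h6]
  rw [hsplit s, hsplit (fun i => Real.sqrt (s i))]
  nlinarith [key]
end

section
/- Let f : ℝ → ℝ be concave and monotone (nondecreasing) on [0,∞) with f(0) ≥ 0 and f(x) > 0 for all x > 0. Let m be a positive natural number and s : Fin m → ℝ with s i > 0 for all i, sorted in decreasing order (i ≤ j implies s i ≥ s j). Then for every k ≤ m, (∑_{i < k} f (s i)) · (∑_{i} s i) ≤ (∑_{i < k} s i) · (∑_{i} f (s i)); that is, applying f to the stakes weakly decreases the cumulative weight share of the top k validators, for every k. -/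
open Finset

lemma ratio_mono_aux (f : ℝ → ℝ)
    (hconc : ConcaveOn ℝ (Set.Ici (0 : ℝ)) f) (hf0 : 0 ≤ f 0) :
    ∀ x y : ℝ, 0 < y → y ≤ x → f x * y ≤ f y * x := by
  intro x y hy hyx
  have hx : 0 < x := hy.trans_le hyx
  have ha : (0:ℝ) ≤ 1 - y / x := by
    have : y / x ≤ 1 := (div_le_one hx).2 hyx
    linarith
  have hb : (0:ℝ) ≤ y / x := by positivity
  have hab : (1 - y / x) + y / x = 1 := by ring
  have key := hconc.2 (Set.mem_Ici.2 le_rfl) (Set.mem_Ici.2 hx.le) ha hb hab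
  have hyy : (1 - y / x) • (0:ℝ) + (y / x) • x = y := by
    rw [smul_eq_mul, smul_eq_mul, mul_zero, zero_add, div_mul_cancel₀ y hx.ne']
  rw [hyy] at key
  have key' : (y / x) * f x ≤ f y := by
    have h0 : 0 ≤ (1 - y / x) * f 0 := mul_nonneg ha hf0
    simp only [smul_eq_mul] at key
    linarith
  have := mul_le_mul_of_nonneg_right key' hx.le
  calc f x * y = (y / x) * f x * x := by field_simp
    _ ≤ f y * x := this

/-- Any concave, nondecreasing reweighting `f` on `[0, ∞)` with `f 0 ≥ 0` and `f > 0` on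
positives weakly decreases the cumulative weight share of the top `k` validators, for
stakes sorted in decreasing order. -/
theorem concave_reweighting_lorenz_dominance (f : ℝ → ℝ)
    (hconc : ConcaveOn ℝ (Set.Ici (0 : ℝ)) f)
    (hmono : MonotoneOn f (Set.Ici (0 : ℝ)))
    (hf0 : 0 ≤ f 0) (hfpos : ∀ x : ℝ, 0 < x → 0 < f x)
    (m : ℕ) (hm : 0 < m) (s : Fin m → ℝ)
    (hs : ∀ i, 0 < s i)
    (hsorted : ∀ i j : Fin m, i ≤ j → s j ≤ s i) :
    ∀ k : ℕ, k ≤ m →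
      (∑ i ∈ univ.filter (fun i : Fin m => (i : ℕ) < k), f (s i)) * (∑ i, s i) ≤
        (∑ i ∈ univ.filter (fun i : Fin m => (i : ℕ) < k), s i) * (∑ i, f (s i)) := by
  intro k hk
  set A : Finset (Fin m) := univ.filter (fun i : Fin m => (i : ℕ) < k) with hA
  set B : Finset (Fin m) := univ.filter (fun i : Fin m => ¬ (i : ℕ) < k) with hB
  have hsplit : ∀ g : Fin m → ℝ, (∑ i, g i) = (∑ i ∈ A, g i) + (∑ i ∈ B, g i) := by
    intro g
    rw [hA, hB, sum_filter_add_sum_filter_not]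
  rw [hsplit s, hsplit (fun i => f (s i))]
  have hcross : (∑ i ∈ A, f (s i)) * (∑ j ∈ B, s j) ≤
      (∑ i ∈ A, s i) * (∑ j ∈ B, f (s j)) := by
    rw [sum_mul_sum, sum_mul_sum]
    apply sum_le_sum
    intro i hiA
    apply sum_le_sum
    intro j hjB
    have hik : (i : ℕ) < k := by
      simp [hA] at hiA; exact hiA
    have hjk : k ≤ (j : ℕ) := by
      simp [hB] at hjB; exact hjB
    have hij : i ≤ j := Fin.le_def.2 (le_of_lt (lt_of_lt_of_le hik hjk))
    have hsij : s j ≤ s i := hsorted i j hij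
    calc f (s i) * s j ≤ f (s j) * s i := ratio_mono_aux f hconc hf0 (s i) (s j) (hs j) hsij
      _ = s i * f (s j) := mul_comm _ _
  nlinarith [hcross]
end

section
/- Let m be a positive natural number and s : Fin m → ℝ with s i ≥ Real.exp 2 for all i, sorted in decreasing order (i ≤ j implies s i ≥ s j). Then for every k ≤ m, (∑_{i < k} Real.log (s i)) · (∑_{i} Real.sqrt (s i)) ≤ (∑_{i < k} Real.sqrt (s i)) · (∑_{i} Real.log (s i)); that is, the cumulative weight share of the top k validators under logarithmic stake weights is at most their share under square-root stake weights. -/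
open Finset

/-- Key pointwise inequality: for `e² ≤ b ≤ a`, `log a / √a ≤ log b / √b`
(cross-multiplied form). -/
lemma log_sqrt_antitone {a b : ℝ} (hb : Real.exp 2 ≤ b) (hab : b ≤ a) :
    Real.log a * Real.sqrt b ≤ Real.sqrt a * Real.log b := by
  have hb0 : (0:ℝ) < b := lt_of_lt_of_le (Real.exp_pos 2) hb
  have ha0 : (0:ℝ) < a := lt_of_lt_of_le hb0 hab
  have hlogb : (2:ℝ) ≤ Real.log b := by
    have := Real.log_le_log (Real.exp_pos 2) hb
    simpa [Real.log_exp] using this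
  have hpos : (0:ℝ) < a / b := div_pos ha0 hb0
  have hsqpos : 0 < Real.sqrt (a / b) := Real.sqrt_pos.mpr hpos
  have h1 : Real.log (Real.sqrt (a / b)) ≤ Real.sqrt (a / b) - 1 :=
    Real.log_le_sub_one_of_pos hsqpos
  have hsq : Real.log (Real.sqrt (a / b)) = Real.log (a / b) / 2 :=
    Real.log_sqrt hpos.le
  have hdiv : Real.log (a / b) = Real.log a - Real.log b :=
    Real.log_div ha0.ne' hb0.ne'
  have hsd : Real.sqrt (a / b) = Real.sqrt a / Real.sqrt b :=
    Real.sqrt_div ha0.le b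
  have hsb0 : 0 < Real.sqrt b := Real.sqrt_pos.mpr hb0
  have hsab : Real.sqrt b ≤ Real.sqrt a := Real.sqrt_le_sqrt hab
  -- from h1: log a - log b ≤ 2 * (√a/√b - 1)
  have h2 : Real.log a - Real.log b ≤ 2 * (Real.sqrt a / Real.sqrt b - 1) := by
    rw [hsq, hdiv, hsd] at h1
    linarith
  have h3 : (Real.log a - Real.log b) * Real.sqrt b ≤ 2 * (Real.sqrt a - Real.sqrt b) := by
    have := mul_le_mul_of_nonneg_right h2 hsb0.le
    calc (Real.log a - Real.log b) * Real.sqrt b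
        ≤ 2 * (Real.sqrt a / Real.sqrt b - 1) * Real.sqrt b := this
      _ = 2 * (Real.sqrt a - Real.sqrt b) := by field_simp
  nlinarith [mul_le_mul_of_nonneg_left hlogb (sub_nonneg.mpr hsab)]

/-- Lorenz dominance of logarithmic stake weights over square-root stake weights:
for stakes `s ≥ e²` sorted in decreasing order, the cumulative weight share of the
top `k` validators under `log` weights is at most that under `√` weights. -/
theorem lsw_lorenz_dominates_srsw (m : ℕ) (hm : 0 < m) (s : Fin m → ℝ)
    (hs : ∀ i, Real.exp 2 ≤ s i)
    (hsorted : ∀ i j : Fin m, i ≤ j → s j ≤ s i) :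
    ∀ k : ℕ, k ≤ m →
      (∑ i ∈ univ.filter (fun i : Fin m => (i : ℕ) < k), Real.log (s i)) *
          (∑ i, Real.sqrt (s i)) ≤
        (∑ i ∈ univ.filter (fun i : Fin m => (i : ℕ) < k), Real.sqrt (s i)) *
          (∑ i, Real.log (s i)) := by
  intro k hk
  set A := univ.filter (fun i : Fin m => (i : ℕ) < k) with hA
  set B := univ.filter (fun i : Fin m => ¬ (i : ℕ) < k) with hB
  have hsplitL : (∑ i, Real.log (s i)) =
      (∑ i ∈ A, Real.log (s i)) + (∑ i ∈ B, Real.log (s i)) :=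
    (Finset.sum_filter_add_sum_filter_not univ _ _).symm
  have hsplitS : (∑ i, Real.sqrt (s i)) =
      (∑ i ∈ A, Real.sqrt (s i)) + (∑ i ∈ B, Real.sqrt (s i)) :=
    (Finset.sum_filter_add_sum_filter_not univ _ _).symm
  rw [hsplitL, hsplitS]
  have hcross : (∑ i ∈ A, Real.log (s i)) * (∑ j ∈ B, Real.sqrt (s j)) ≤
      (∑ i ∈ A, Real.sqrt (s i)) * (∑ j ∈ B, Real.log (s j)) := by
    rw [Finset.sum_mul_sum, Finset.sum_mul_sum]
    apply Finset.sum_le_sum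
    intro i hi
    apply Finset.sum_le_sum
    intro j hj
    have hik : (i : ℕ) < k := (Finset.mem_filter.mp hi).2
    have hjk : ¬ (j : ℕ) < k := (Finset.mem_filter.mp hj).2
    have hij : i ≤ j := by
      have : (i : ℕ) ≤ (j : ℕ) := le_trans hik.le (le_of_not_gt hjk)
      exact this
    exact log_sqrt_antitone (hs j) (hsorted i j hij)
  nlinarith [hcross]
end

section
/- Let m be a positive natural number, w : Fin m → ℝ with w i > 0 for all i, and T a real number with 0 < T ≤ ∑_i w i. Then the set of cardinalities |K| over subsets K ⊆ Fin m with ∑_{i ∈ K} w i ≥ T has a minimum, and this minimum equals the least natural number k such that the sum of the k largest values of w is at least T. -/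
open Finset

lemma strictMono_fin_le {n : ℕ} {f : Fin n → ℕ} (hf : StrictMono f) :
    ∀ j : Fin n, (j : ℕ) ≤ f j := by
  suffices h : ∀ k : ℕ, ∀ j : Fin n, (j : ℕ) = k → k ≤ f j by
    intro j; exact h _ j rfl
  intro k
  induction k with
  | zero => intro j _; exact Nat.zero_le _
  | succ k ih =>
    intro j hj
    have hk : k < n := by omega
    have h1 : k ≤ f ⟨k, hk⟩ := ih ⟨k, hk⟩ rfl
    have h2 : f ⟨k, hk⟩ < f j := hf (by simp [Fin.lt_def, hj])
    omega

lemma filter_lt_eq_map {m k : ℕ} (hk : k ≤ m) :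
    univ.filter (fun i : Fin m => (i : ℕ) < k)
      = (univ : Finset (Fin k)).map (Fin.castLEEmb hk) := by
  ext i
  simp only [Finset.mem_filter, Finset.mem_univ, true_and, Finset.mem_map,
    Fin.castLEEmb, Function.Embedding.coeFn_mk]
  constructor
  · intro hi
    exact ⟨⟨i, hi⟩, by simp [Fin.castLE, Fin.ext_iff]⟩
  · rintro ⟨j, -, rfl⟩
    simp

/-- Sum over any finset `K` is at most the sum of the top `|K|` weights. -/
lemma sum_le_top_k {m : ℕ} (w : Fin m → ℝ) (σ : Equiv.Perm (Fin m))
    (hσ : ∀ i j : Fin m, i ≤ j → w (σ j) ≤ w (σ i)) (K : Finset (Fin m)) :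
    ∑ i ∈ K, w i ≤ ∑ i ∈ univ.filter (fun i : Fin m => (i : ℕ) < K.card), w (σ i) := by
  classical
  set K' : Finset (Fin m) := K.image σ.symm with hK'
  have hcard : K'.card = K.card := Finset.card_image_of_injective _ σ.symm.injective
  have hsum : ∑ i ∈ K, w i = ∑ i ∈ K', w (σ i) := by
    rw [hK', Finset.sum_image (fun a _ b _ h => σ.symm.injective h)]
    simp
  set n := K.card with hn
  have hnm : n ≤ m := by
    calc n = K.card := rfl
    _ ≤ (univ : Finset (Fin m)).card := Finset.card_le_univ K
    _ = m := by simp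
  have hcard' : K'.card = n := hcard
  set e := K'.orderIsoOfFin hcard' with he
  have hle : ∀ j : Fin n, (j : ℕ) ≤ ((e j : Fin m) : ℕ) := by
    have : StrictMono (fun j : Fin n => ((e j : Fin m) : ℕ)) := by
      intro a b hab
      exact Fin.lt_def.mp (Subtype.coe_lt_coe.mpr (e.strictMono hab))
    exact strictMono_fin_le this
  have h1 : ∑ i ∈ K', w (σ i) = ∑ j : Fin n, w (σ (e j)) := by
    rw [← Finset.sum_attach K' (fun i => w (σ i))]
    exact (Fintype.sum_equiv e.toEquiv _ _ (fun j => rfl)).symm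
  have key : ∑ i ∈ K', w (σ i) ≤ ∑ j : Fin n, w (σ (Fin.castLE hnm j)) := by
    rw [h1]
    apply Finset.sum_le_sum
    intro j _
    apply hσ
    exact Fin.le_def.mpr (by simpa using hle j)
  have h2 : ∑ i ∈ univ.filter (fun i : Fin m => (i : ℕ) < n), w (σ i)
      = ∑ j : Fin n, w (σ (Fin.castLE hnm j)) := by
    rw [filter_lt_eq_map hnm, Finset.sum_map]
    rfl
  rw [hsum, h2]
  exact key

/-- The minimal number of validators whose combined weight reaches a threshold `T`
exists, and it equals the least `k` such that the sum of the `k` largest weights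
(i.e., the first `k` weights after sorting in decreasing order by `σ`) is at least `T`. -/
theorem min_coalition_card_eq_least_top_k (m : ℕ) (hm : 0 < m) (w : Fin m → ℝ)
    (hw : ∀ i, 0 < w i) (T : ℝ) (hT : 0 < T) (hT' : T ≤ ∑ i, w i)
    (σ : Equiv.Perm (Fin m))
    (hσ : ∀ i j : Fin m, i ≤ j → w (σ j) ≤ w (σ i)) :
    IsLeast {n : ℕ | ∃ K : Finset (Fin m), K.card = n ∧ T ≤ ∑ i ∈ K, w i}
      (sInf {k : ℕ |
        T ≤ ∑ i ∈ univ.filter (fun i : Fin m => (i : ℕ) < k), w (σ i)}) := by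
  classical
  set A := {k : ℕ | T ≤ ∑ i ∈ univ.filter (fun i : Fin m => (i : ℕ) < k), w (σ i)}
  have hmA : m ∈ A := by
    have : (univ.filter (fun i : Fin m => (i : ℕ) < m)) = univ := by
      ext i; simp [i.isLt]
    simp only [A, Set.mem_setOf_eq, this]
    calc T ≤ ∑ i, w i := hT'
    _ = ∑ i, w (σ i) := (Equiv.sum_comp σ w).symm
  have hAne : A.Nonempty := ⟨m, hmA⟩
  have hk0 : sInf A ∈ A := Nat.sInf_mem hAne
  constructor
  · refine ⟨(univ.filter (fun i : Fin m => (i : ℕ) < sInf A)).image σ, ?_, ?_⟩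
    · rw [Finset.card_image_of_injective _ σ.injective]
      have hle : sInf A ≤ m := Nat.sInf_le hmA
      rw [filter_lt_eq_map hle, Finset.card_map, Finset.card_univ, Fintype.card_fin]
    · rw [Finset.sum_image (fun a _ b _ h => σ.injective h)]
      exact hk0
  · rintro n ⟨K, rfl, hK⟩
    apply Nat.sInf_le
    exact le_trans hK (sum_le_top_k w σ hσ K)
end

section
/- Let m be a positive natural number and s : Fin m → ℝ with s i > 0 for all i. Define, for a weight function w : Fin m → ℝ, N_L(w) as the minimum cardinality of a subset K ⊆ Fin m such that ∑_{i ∈ K} w i ≥ (1/3) · ∑_i w i. Then N_L(fun i => Real.sqrt (s i)) ≥ N_L(s); that is, the Nakamoto coefficient for liveness under the Square Root Stake Weight model is at least that under the linear stake-weight model. -/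
open Finset

/-- The Nakamoto coefficient for liveness of a weight function `w` on `m` validators:
the minimum cardinality of a subset of validators whose cumulative weight is at least
one-third of the total weight. -/
noncomputable def nakamotoLiveness (m : ℕ) (w : Fin m → ℝ) : ℕ :=
  sInf {n : ℕ | ∃ K : Finset (Fin m), K.card = n ∧ (1 / 3 : ℝ) * ∑ i, w i ≤ ∑ i ∈ K, w i}

/-- There exists a "top-`k`" set of validators by stake. -/
lemma exists_top_set (m : ℕ) (s : Fin m → ℝ) (k : ℕ) (hk : k ≤ m) :
    ∃ K : Finset (Fin m), K.card = k ∧ ∀ i ∈ K, ∀ j ∉ K, s j ≤ s i := by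
  induction k with
  | zero => exact ⟨∅, rfl, by simp⟩
  | succ k ih =>
    obtain ⟨K, hcard, hK⟩ := ih (Nat.le_of_succ_le hk)
    have hne : Kᶜ.Nonempty := by
      rw [← Finset.card_pos, Finset.card_compl, Fintype.card_fin, hcard]
      omega
    obtain ⟨j, hjmem, hjmax⟩ := Finset.exists_max_image Kᶜ s hne
    have hjK : j ∉ K := Finset.mem_compl.mp hjmem
    refine ⟨insert j K, by rw [Finset.card_insert_of_notMem hjK, hcard], ?_⟩
    intro i hi l hl
    have hlK : l ∉ K := fun h => hl (Finset.mem_insert_of_mem h)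
    rcases Finset.mem_insert.mp hi with rfl | hiK
    · exact hjmax l (Finset.mem_compl.mpr hlK)
    · exact hK i hiK l hlK

/-- A top set has at least as large a linear-stake fraction as sqrt-stake fraction
(cross-multiplied form). -/
lemma top_set_cross (m : ℕ) (s : Fin m → ℝ) (hs : ∀ i, 0 < s i)
    (K : Finset (Fin m)) (hK : ∀ i ∈ K, ∀ j ∉ K, s j ≤ s i) :
    (∑ i ∈ K, Real.sqrt (s i)) * ∑ i, s i ≤ (∑ i ∈ K, s i) * ∑ i, Real.sqrt (s i) := by
  have hsplit : ∀ f : Fin m → ℝ, ∑ i, f i = ∑ i ∈ K, f i + ∑ i ∈ Kᶜ, f i := by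
    intro f
    rw [Finset.sum_add_sum_compl]
  rw [hsplit s, hsplit (fun i => Real.sqrt (s i))]
  have key : (∑ i ∈ K, Real.sqrt (s i)) * ∑ j ∈ Kᶜ, s j ≤
      (∑ i ∈ K, s i) * ∑ j ∈ Kᶜ, Real.sqrt (s j) := by
    rw [Finset.sum_mul_sum, Finset.sum_mul_sum]
    refine Finset.sum_le_sum fun i hi => Finset.sum_le_sum fun j hj => ?_
    have hji : s j ≤ s i := hK i hi j (Finset.mem_compl.mp hj)
    have h1 : Real.sqrt (s i) * s j = Real.sqrt (s i) * Real.sqrt (s j) * Real.sqrt (s j) := by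
      rw [mul_assoc, Real.mul_self_sqrt (hs j).le]
    have h2 : s i * Real.sqrt (s j) = Real.sqrt (s i) * Real.sqrt (s i) * Real.sqrt (s j) := by
      rw [Real.mul_self_sqrt (hs i).le]
    rw [h1, h2]
    exact mul_le_mul_of_nonneg_right
      (mul_le_mul_of_nonneg_left (Real.sqrt_le_sqrt hji) (Real.sqrt_nonneg _))
      (Real.sqrt_nonneg _)
  nlinarith [key]

/-- A top set collects at least as much sqrt-weight as any set of the same cardinality. -/
lemma top_set_sqrt_ge (m : ℕ) (s : Fin m → ℝ)
    (K' : Finset (Fin m)) (hK' : ∀ i ∈ K', ∀ j ∉ K', s j ≤ s i)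
    (K : Finset (Fin m)) (hcard : K.card = K'.card) :
    ∑ i ∈ K, Real.sqrt (s i) ≤ ∑ i ∈ K', Real.sqrt (s i) := by
  have hAB : (K \ K').card = (K' \ K).card := by
    have h1 := Finset.card_sdiff_add_card_inter K K'
    have h2 := Finset.card_sdiff_add_card_inter K' K
    rw [Finset.inter_comm] at h2
    omega
  have hsum : ∑ i ∈ K \ K', Real.sqrt (s i) ≤ ∑ i ∈ K' \ K, Real.sqrt (s i) := by
    let e := Finset.equivOfCardEq hAB
    calc ∑ i ∈ K \ K', Real.sqrt (s i)
        = ∑ x : (K \ K' : Finset (Fin m)), Real.sqrt (s x) := (Finset.sum_coe_sort _ _).symm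
      _ ≤ ∑ x : (K \ K' : Finset (Fin m)), Real.sqrt (s (e x : Fin m)) := by
          refine Finset.sum_le_sum fun x _ => Real.sqrt_le_sqrt ?_
          have hx : (x : Fin m) ∉ K' := (Finset.mem_sdiff.mp x.2).2
          have hex : ((e x : Fin m)) ∈ K' := (Finset.mem_sdiff.mp (e x).2).1
          exact hK' _ hex _ hx
      _ = ∑ y : (K' \ K : Finset (Fin m)), Real.sqrt (s y) :=
          e.sum_comp (fun y : (K' \ K : Finset (Fin m)) => Real.sqrt (s y))
      _ = ∑ i ∈ K' \ K, Real.sqrt (s i) :=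
          Finset.sum_coe_sort (K' \ K) (fun i => Real.sqrt (s i))
  have h1 := Finset.sum_inter_add_sum_sdiff K K' (fun i => Real.sqrt (s i))
  have h2 := Finset.sum_inter_add_sum_sdiff K' K (fun i => Real.sqrt (s i))
  rw [Finset.inter_comm] at h2
  linarith

/-- Lemma 1 (liveness half): the Nakamoto coefficient for liveness under the
Square Root Stake Weight model is at least that under the linear stake-weight model. -/
theorem srsw_nakamoto_liveness_ge (m : ℕ) (hm : 0 < m) (s : Fin m → ℝ)
    (hs : ∀ i, 0 < s i) :
    nakamotoLiveness m s ≤ nakamotoLiveness m (fun i => Real.sqrt (s i)) := by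
  set T : ℝ := ∑ i, s i with hT
  set Tq : ℝ := ∑ i, Real.sqrt (s i) with hTq
  have hTpos : 0 < T := Finset.sum_pos (fun i _ => hs i) ⟨⟨0, hm⟩, Finset.mem_univ _⟩
  have hTqpos : 0 < Tq :=
    Finset.sum_pos (fun i _ => Real.sqrt_pos.mpr (hs i)) ⟨⟨0, hm⟩, Finset.mem_univ _⟩
  -- the defining set for sqrt weights is nonempty
  have hne : {n : ℕ | ∃ K : Finset (Fin m), K.card = n ∧
      (1 / 3 : ℝ) * ∑ i, Real.sqrt (s i) ≤ ∑ i ∈ K, Real.sqrt (s i)}.Nonempty := by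
    refine ⟨m, Finset.univ, by simp, ?_⟩
    nlinarith
  have hmem := Nat.sInf_mem hne
  obtain ⟨K, hKcard, hKsum⟩ := hmem
  have hkle : K.card ≤ m := by
    simpa using Finset.card_le_card (Finset.subset_univ K)
  obtain ⟨K', hK'card, hK'top⟩ := exists_top_set m s K.card hkle
  have hsqrt_ge := top_set_sqrt_ge m s K' hK'top K hK'card.symm
  have hcross := top_set_cross m s hs K' hK'top
  have hlin : (1 / 3 : ℝ) * T ≤ ∑ i ∈ K', s i := by
    have h1 : (1 / 3 : ℝ) * Tq ≤ ∑ i ∈ K', Real.sqrt (s i) := le_trans hKsum hsqrt_ge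
    have h2 : (1 / 3 : ℝ) * Tq * T ≤ (∑ i ∈ K', s i) * Tq := by
      calc (1 / 3 : ℝ) * Tq * T ≤ (∑ i ∈ K', Real.sqrt (s i)) * T := by
            exact mul_le_mul_of_nonneg_right h1 hTpos.le
        _ ≤ (∑ i ∈ K', s i) * Tq := hcross
    nlinarith
  apply Nat.sInf_le
  exact ⟨K', by rw [hK'card, hKcard]; rfl, hlin⟩
end

section
/- Let f : ℝ → ℝ be concave and monotone (nondecreasing) on [0,∞) with f(0) ≥ 0 and f(x) > 0 for all x > 0. Let m be a positive natural number, s : Fin m → ℝ with s i > 0 for all i, and θ a real number with 0 < θ ≤ 1. Define, for a weight function w : Fin m → ℝ, N_θ(w) as the minimum cardinality of a subset K ⊆ Fin m such that ∑_{i ∈ K} w i ≥ θ · ∑_i w i. Then N_θ(fun i => f (s i)) ≥ N_θ(s). -/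
open Finset

/-- The fraction-`θ` Nakamoto coefficient of a weight function `w` on `m` validators:
the minimum cardinality of a subset of validators whose cumulative weight is at least
the fraction `θ` of the total weight. -/
noncomputable def nakamotoCoeff (m : ℕ) (θ : ℝ) (w : Fin m → ℝ) : ℕ :=
  sInf {n : ℕ | ∃ K : Finset (Fin m), K.card = n ∧ θ * ∑ i, w i ≤ ∑ i ∈ K, w i}

/-- Ratio monotonicity: for a concave `f` on `[0,∞)` with `f 0 ≥ 0`,
`f x / x` is nonincreasing, i.e. `x * f y ≤ y * f x` for `0 < x ≤ y`. -/
lemma ratio_aux (f : ℝ → ℝ) (hconc : ConcaveOn ℝ (Set.Ici (0 : ℝ)) f)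
    (hf0 : 0 ≤ f 0) {x y : ℝ} (hx : 0 < x) (hxy : x ≤ y) :
    x * f y ≤ y * f x := by
  have hy : 0 < y := lt_of_lt_of_le hx hxy
  have ha : (0:ℝ) ≤ x / y := by positivity
  have hb : (0:ℝ) ≤ 1 - x / y := by
    have : x / y ≤ 1 := (div_le_one hy).mpr hxy
    linarith
  have hab : x / y + (1 - x / y) = 1 := by ring
  have hkey := hconc.2 (Set.mem_Ici.mpr (le_of_lt hy)) (Set.mem_Ici.mpr le_rfl)
    ha hb hab
  have hxy' : (x / y) • y + (1 - x / y) • (0:ℝ) = x := by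
    rw [smul_eq_mul, smul_eq_mul, mul_zero, add_zero]
    exact div_mul_cancel₀ x (ne_of_gt hy)
  rw [hxy'] at hkey
  have h1 : (x / y) * f y ≤ f x := by
    have h2 : (0:ℝ) ≤ (1 - x / y) * f 0 := mul_nonneg hb hf0
    simp only [smul_eq_mul] at hkey
    linarith
  have h3 := mul_le_mul_of_nonneg_left h1 (le_of_lt hy)
  have h4 : y * ((x / y) * f y) = x * f y := by
    field_simp
  linarith

/-- Any concave, nondecreasing reweighting `f` on `[0, ∞)` with `f 0 ≥ 0` and `f > 0`
on positives weakly increases the fraction-`θ` Nakamoto coefficient. -/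
theorem concave_reweighting_nakamoto_ge (f : ℝ → ℝ)
    (hconc : ConcaveOn ℝ (Set.Ici (0 : ℝ)) f)
    (hmono : MonotoneOn f (Set.Ici (0 : ℝ)))
    (hf0 : 0 ≤ f 0) (hfpos : ∀ x : ℝ, 0 < x → 0 < f x)
    (m : ℕ) (hm : 0 < m) (s : Fin m → ℝ) (hs : ∀ i, 0 < s i)
    (θ : ℝ) (hθ : 0 < θ) (hθ1 : θ ≤ 1) :
    nakamotoCoeff m θ s ≤ nakamotoCoeff m θ (fun i => f (s i)) := by
  classical
  haveI : Nonempty (Fin m) := ⟨⟨0, hm⟩⟩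
  set g : Fin m → ℝ := fun i => f (s i) with hg
  have hgpos : ∀ i, 0 < g i := fun i => hfpos _ (hs i)
  -- the defining set for g is nonempty (univ works)
  have htotg : (0:ℝ) < ∑ i, g i := Finset.sum_pos (fun i _ => hgpos i) univ_nonempty
  have hne : {n : ℕ | ∃ K : Finset (Fin m), K.card = n ∧
      θ * ∑ i, g i ≤ ∑ i ∈ K, g i}.Nonempty := by
    refine ⟨(univ : Finset (Fin m)).card, univ, rfl, ?_⟩
    nlinarith [htotg]
  set n := nakamotoCoeff m θ g with hn
  obtain ⟨K, hKcard, hKsum⟩ : ∃ K : Finset (Fin m), K.card = n ∧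
      θ * ∑ i, g i ≤ ∑ i ∈ K, g i := Nat.sInf_mem hne
  -- K is nonempty, hence n ≥ 1
  have hKne : K.Nonempty := by
    rcases K.eq_empty_or_nonempty with h | h
    · exfalso
      rw [h, Finset.sum_empty] at hKsum
      nlinarith [htotg]
    · exact h
  -- choose K* maximizing ∑ s over sets of cardinality n
  set 𝒦 : Finset (Finset (Fin m)) :=
    (univ : Finset (Finset (Fin m))).filter (fun K' => K'.card = n) with h𝒦
  have hK𝒦 : K ∈ 𝒦 := by simp [h𝒦, hKcard]
  obtain ⟨Ks, hKs𝒦, hKsmax⟩ := Finset.exists_max_image 𝒦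
    (fun K' => ∑ i ∈ K', s i) ⟨K, hK𝒦⟩
  have hKscard : Ks.card = n := by simpa [h𝒦] using hKs𝒦
  have hKsne : Ks.Nonempty := by
    rw [← Finset.card_pos, hKscard, ← hKcard, Finset.card_pos]; exact hKne
  -- swap property: elements of Ks dominate elements outside Ks
  have hswap : ∀ i ∈ Ks, ∀ j ∉ Ks, s j ≤ s i := by
    intro i hi j hj
    by_contra hlt
    push_neg at hlt
    have hjne : j ∉ Ks.erase i := fun h => hj (Finset.mem_of_mem_erase h)
    set K'' := insert j (Ks.erase i) with hK''
    have hcard'' : K''.card = n := by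
      have hpos : 0 < Ks.card := Finset.card_pos.mpr ⟨i, hi⟩
      rw [hK'', Finset.card_insert_of_notMem hjne, Finset.card_erase_of_mem hi]
      omega
    have hK''𝒦 : K'' ∈ 𝒦 := by simp [h𝒦, hcard'']
    have hle := hKsmax K'' hK''𝒦
    have hsum'' : ∑ x ∈ K'', s x = s j + (∑ x ∈ Ks, s x - s i) := by
      rw [hK'', Finset.sum_insert hjne]
      have := Finset.sum_erase_add Ks s hi
      linarith
    rw [hsum''] at hle
    linarith
  -- Ks also maximizes ∑ g among card-n sets containing K's sum
  have hgKs : ∑ i ∈ K, g i ≤ ∑ i ∈ Ks, g i := by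
    have hsub : ∑ i ∈ K ∩ Ks, g i + ∑ i ∈ K \ Ks, g i = ∑ i ∈ K, g i := by
      rw [Finset.sum_inter_add_sum_sdiff]
    have hsub' : ∑ i ∈ K ∩ Ks, g i + ∑ i ∈ Ks \ K, g i = ∑ i ∈ Ks, g i := by
      rw [Finset.inter_comm, Finset.sum_inter_add_sum_sdiff]
    have hcards : (K \ Ks).card = (Ks \ K).card := by
      have h1 := Finset.card_inter_add_card_sdiff K Ks
      have h2 := Finset.card_inter_add_card_sdiff Ks K
      rw [Finset.inter_comm] at h2
      omega
    -- every element of K \ Ks has g-value ≤ every element of Ks \ K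
    have hdom : ∀ j ∈ K \ Ks, ∀ i ∈ Ks \ K, g j ≤ g i := by
      intro j hj i hi
      have hj' := (Finset.mem_sdiff.mp hj).2
      have hi' := (Finset.mem_sdiff.mp hi).1
      exact hmono (le_of_lt (hs j)) (le_of_lt (hs i)) (hswap i hi' j hj')
    have hBA : ∑ j ∈ K \ Ks, g j ≤ ∑ i ∈ Ks \ K, g i := by
      rcases (K \ Ks).eq_empty_or_nonempty with h | hB
      · rw [h, Finset.sum_empty]
        exact Finset.sum_nonneg (fun i _ => le_of_lt (hgpos i))
      · obtain ⟨i0, hi0, hi0min⟩ := Finset.exists_min_image (Ks \ K) g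
          (by rwa [← Finset.card_pos, ← hcards, Finset.card_pos])
        calc ∑ j ∈ K \ Ks, g j ≤ ∑ _j ∈ K \ Ks, g i0 :=
              Finset.sum_le_sum (fun j hj => hdom j hj i0 hi0)
          _ = (K \ Ks).card • g i0 := by rw [Finset.sum_const]
          _ = (Ks \ K).card • g i0 := by rw [hcards]
          _ = ∑ _i ∈ Ks \ K, g i0 := by rw [Finset.sum_const]
          _ ≤ ∑ i ∈ Ks \ K, g i := Finset.sum_le_sum (fun i hi => hi0min i hi)
    linarith
  have hKsgsum : θ * ∑ i, g i ≤ ∑ i ∈ Ks, g i := le_trans hKsum hgKs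
  -- ratio threshold
  obtain ⟨i0, hi0Ks, hi0min⟩ := Finset.exists_min_image Ks s hKsne
  have hsi0 : 0 < s i0 := hs i0
  set c : ℝ := g i0 / s i0 with hc
  have hcpos : 0 < c := div_pos (hgpos i0) hsi0
  -- on Ks : g i ≤ c * s i
  have hin : ∀ i ∈ Ks, g i ≤ c * s i := by
    intro i hi
    have := ratio_aux f hconc hf0 hsi0 (hi0min i hi)
    rw [hc, div_mul_eq_mul_div, le_div_iff₀ hsi0]
    simpa [hg, mul_comm] using this
  -- off Ks : c * s j ≤ g j
  have hout : ∀ j ∉ Ks, c * s j ≤ g j := by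
    intro j hj
    have hsj := hs j
    have := ratio_aux f hconc hf0 hsj (hswap i0 hi0Ks j hj)
    rw [hc, div_mul_eq_mul_div, div_le_iff₀ hsi0]
    simpa [hg, mul_comm] using this
  -- assemble
  have hsplitg : ∑ i ∈ Ks, g i + ∑ i ∈ Ksᶜ, g i = ∑ i, g i :=
    Finset.sum_add_sum_compl Ks g
  have hsplits : ∑ i ∈ Ks, s i + ∑ i ∈ Ksᶜ, s i = ∑ i, s i :=
    Finset.sum_add_sum_compl Ks s
  have hgin : ∑ i ∈ Ks, g i ≤ c * ∑ i ∈ Ks, s i := by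
    rw [Finset.mul_sum]; exact Finset.sum_le_sum hin
  have hgout : c * ∑ i ∈ Ksᶜ, s i ≤ ∑ i ∈ Ksᶜ, g i := by
    rw [Finset.mul_sum]
    exact Finset.sum_le_sum (fun j hj => hout j (by simpa using hj))
  have hkey : θ * ∑ i ∈ Ksᶜ, g i ≤ (1 - θ) * ∑ i ∈ Ks, g i := by nlinarith
  have hfinal : θ * ∑ i, s i ≤ ∑ i ∈ Ks, s i := by
    have h1 : θ * (c * ∑ i ∈ Ksᶜ, s i) ≤ (1 - θ) * (c * ∑ i ∈ Ks, s i) := by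
      calc θ * (c * ∑ i ∈ Ksᶜ, s i) ≤ θ * ∑ i ∈ Ksᶜ, g i :=
            mul_le_mul_of_nonneg_left hgout (le_of_lt hθ)
        _ ≤ (1 - θ) * ∑ i ∈ Ks, g i := hkey
        _ ≤ (1 - θ) * (c * ∑ i ∈ Ks, s i) :=
            mul_le_mul_of_nonneg_left hgin (by linarith)
    have h2 : θ * ∑ i ∈ Ksᶜ, s i ≤ (1 - θ) * ∑ i ∈ Ks, s i := by
      have := mul_le_mul_of_nonneg_left h1 (le_of_lt (inv_pos.mpr hcpos))
      have hc0 : c ≠ 0 := ne_of_gt hcpos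
      field_simp at this
      nlinarith
    nlinarith [hsplits]
  exact Nat.sInf_le ⟨Ks, hKscard, hfinal⟩
end

section
/- Let m be a positive natural number and s : Fin m → ℝ with s i ≥ Real.exp 2 for all i. Define, for a weight function w : Fin m → ℝ, N_L(w) as the minimum cardinality of a subset K ⊆ Fin m such that ∑_{i ∈ K} w i ≥ (1/3) · ∑_i w i. Then N_L(fun i => Real.log (s i)) ≥ N_L(fun i => Real.sqrt (s i)); that is, the Nakamoto coefficient for liveness under the Logarithmic Stake Weight model is at least that under the Square Root Stake Weight model. -/
open Finset

/-- `log x / √x` is antitone on `[e², ∞)`. -/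
lemma ratio_lemma {x y : ℝ} (hy : Real.exp 2 ≤ y) (hxy : y ≤ x) :
    Real.log x * Real.sqrt y ≤ Real.log y * Real.sqrt x := by
  have hy0 : (0:ℝ) < y := lt_of_lt_of_le (Real.exp_pos 2) hy
  have hx0 : (0:ℝ) < x := lt_of_lt_of_le hy0 hxy
  have hsy : Real.exp 1 ≤ Real.sqrt y := by
    have h21 : Real.exp 2 = Real.exp 1 ^ 2 := by rw [sq, ← Real.exp_add]; norm_num
    rw [show Real.exp 1 = Real.sqrt (Real.exp 2) by
      rw [h21, Real.sqrt_sq (Real.exp_pos 1).le]]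
    exact Real.sqrt_le_sqrt hy
  have hsx : Real.exp 1 ≤ Real.sqrt x := hsy.trans (Real.sqrt_le_sqrt hxy)
  have hanti := Real.log_div_self_antitoneOn hsy hsx (Real.sqrt_le_sqrt hxy)
  have hly : Real.log (Real.sqrt y) = Real.log y / 2 := Real.log_sqrt hy0.le
  have hlx : Real.log (Real.sqrt x) = Real.log x / 2 := Real.log_sqrt hx0.le
  simp only [hly, hlx] at hanti
  have hsy0 : (0:ℝ) < Real.sqrt y := Real.sqrt_pos.mpr hy0
  have hsx0 : (0:ℝ) < Real.sqrt x := Real.sqrt_pos.mpr hx0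
  rw [div_div, div_div, div_le_div_iff₀ (by positivity) (by positivity)] at hanti
  nlinarith [hanti]

/-- Theorem 2 (liveness part): for stakes at least `e²`, the Nakamoto coefficient for
liveness under the Logarithmic Stake Weight model is at least that under the
Square Root Stake Weight model. -/
theorem lsw_nakamoto_liveness_ge_srsw (m : ℕ) (hm : 0 < m) (s : Fin m → ℝ)
    (hs : ∀ i, Real.exp 2 ≤ s i) :
    nakamotoLiveness m (fun i => Real.sqrt (s i)) ≤
      nakamotoLiveness m (fun i => Real.log (s i)) := by
  set L : Fin m → ℝ := fun i => Real.log (s i) with hLdef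
  set Q : Fin m → ℝ := fun i => Real.sqrt (s i) with hQdef
  have hs0 : ∀ i, (0:ℝ) < s i := fun i => lt_of_lt_of_le (Real.exp_pos 2) (hs i)
  have hL2 : ∀ i, (2:ℝ) ≤ L i := by
    intro i
    have := Real.log_le_log (Real.exp_pos 2) (hs i)
    rwa [Real.log_exp] at this
  have hL0 : ∀ i, (0:ℝ) < L i := fun i => lt_of_lt_of_le two_pos (hL2 i)
  have hQ0 : ∀ i, (0:ℝ) < Q i := fun i => Real.sqrt_pos.mpr (hs0 i)
  -- the defining set for L is nonempty
  have hne : {n : ℕ | ∃ K : Finset (Fin m), K.card = n ∧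
      (1 / 3 : ℝ) * ∑ i, L i ≤ ∑ i ∈ K, L i}.Nonempty := by
    refine ⟨m, Finset.univ, by simp, ?_⟩
    have h1 : (0:ℝ) ≤ ∑ i, L i := Finset.sum_nonneg fun i _ => (hL0 i).le
    linarith
  set n := nakamotoLiveness m L with hn
  obtain ⟨K, hKcard, hKsum⟩ := Nat.sInf_mem hne
  have hKn : K.card = n := hKcard
  -- choose T of card n maximizing the L-sum
  have hpow : (Finset.univ.powersetCard n : Finset (Finset (Fin m))).Nonempty :=
    ⟨K, by simp [Finset.mem_powersetCard, hKn]⟩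
  obtain ⟨T, hTmem, hTmax⟩ := Finset.exists_max_image _ (fun A => ∑ i ∈ A, L i) hpow
  rw [Finset.mem_powersetCard] at hTmem
  obtain ⟨-, hTcard⟩ := hTmem
  have hTsum : (1 / 3 : ℝ) * ∑ i, L i ≤ ∑ i ∈ T, L i := by
    refine le_trans hKsum ?_
    exact hTmax K (by simp [Finset.mem_powersetCard, hKn])
  -- swap argument: elements of T have larger stake than elements outside
  have hswap : ∀ i ∈ T, ∀ j ∉ T, L j ≤ L i := by
    intro i hi j hj
    have hij : i ≠ j := fun h => hj (h ▸ hi)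
    set T' := insert j (T.erase i) with hT'
    have hjT' : j ∉ T.erase i := fun h => hj (Finset.mem_of_mem_erase h)
    have hT'card : T'.card = n := by
      rw [hT', Finset.card_insert_of_notMem hjT', Finset.card_erase_add_one hi, hTcard]
    have hT'sum : ∑ i ∈ T', L i = ∑ i ∈ T, L i - L i + L j := by
      rw [hT', Finset.sum_insert hjT', Finset.sum_erase_eq_sub hi]; ring
    have := hTmax T' (by simp [Finset.mem_powersetCard, hT'card])
    rw [hT'sum] at this
    linarith
  have hstake : ∀ i ∈ T, ∀ j ∉ T, s j ≤ s i := by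
    intro i hi j hj
    have := hswap i hi j hj
    exact (Real.log_le_log_iff (hs0 j) (hs0 i)).mp this
  -- pairwise inequality
  have hpair : ∀ i ∈ T, ∀ j ∉ T, Q j * L i ≤ Q i * L j := by
    intro i hi j hj
    have := ratio_lemma (hs j) (hstake i hi j hj)
    -- log (s i) * sqrt (s j) ≤ log (s j) * sqrt (s i)
    simpa [hLdef, hQdef, mul_comm] using this
  -- cross products of sums
  have hcross : (∑ j ∈ Tᶜ, Q j) * (∑ i ∈ T, L i) ≤ (∑ i ∈ T, Q i) * (∑ j ∈ Tᶜ, L j) := by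
    rw [Finset.sum_mul_sum, Finset.sum_mul_sum, Finset.sum_comm]
    refine Finset.sum_le_sum fun i hi => Finset.sum_le_sum fun j hj => ?_
    have hjT : j ∉ T := by simpa using (Finset.mem_compl.mp hj)
    exact hpair i hi j hjT
  -- T nonempty
  have hTLpos : (0:ℝ) < ∑ i ∈ T, L i := by
    have htot : (0:ℝ) < ∑ i, L i := by
      apply Finset.sum_pos (fun i _ => hL0 i)
      exact Finset.univ_nonempty_iff.mpr (Fin.pos_iff_nonempty.mp hm)
    calc (0:ℝ) < (1/3) * ∑ i, L i := by linarith
    _ ≤ _ := hTsum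
  -- L complement bound: ∑_T L ≥ (1/2) ∑_{Tc} L
  have hhalf : (∑ j ∈ Tᶜ, L j) ≤ 2 * ∑ i ∈ T, L i := by
    have hsplit : ∑ i, L i = ∑ i ∈ T, L i + ∑ j ∈ Tᶜ, L j := by
      rw [← Finset.sum_add_sum_compl T L]
    rw [hsplit] at hTsum
    linarith
  -- conclude the Q threshold for T
  have hQsplit : ∑ i, Q i = ∑ i ∈ T, Q i + ∑ j ∈ Tᶜ, Q j := by
    rw [← Finset.sum_add_sum_compl T Q]
  have hQT : (1 / 3 : ℝ) * ∑ i, Q i ≤ ∑ i ∈ T, Q i := by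
    have hQTpos : (0:ℝ) ≤ ∑ i ∈ T, Q i :=
      Finset.sum_nonneg fun i _ => (hQ0 i).le
    have h2 : (∑ j ∈ Tᶜ, Q j) * (∑ i ∈ T, L i) ≤
        (∑ i ∈ T, Q i) * (2 * ∑ i ∈ T, L i) := by
      calc (∑ j ∈ Tᶜ, Q j) * (∑ i ∈ T, L i) ≤ (∑ i ∈ T, Q i) * (∑ j ∈ Tᶜ, L j) := hcross
      _ ≤ _ := by
        apply mul_le_mul_of_nonneg_left hhalf hQTpos
    have h3 : (∑ j ∈ Tᶜ, Q j) ≤ 2 * ∑ i ∈ T, Q i := by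
      have := (mul_le_mul_iff_of_pos_right hTLpos).mp (by linarith [h2] : (∑ j ∈ Tᶜ, Q j) * (∑ i ∈ T, L i) ≤ (2 * ∑ i ∈ T, Q i) * (∑ i ∈ T, L i))
      exact this
    rw [hQsplit]
    linarith
  exact Nat.sInf_le ⟨T, hTcard, hQT⟩
end

section
/- Let m be a positive natural number and s : Fin m → ℝ with s i ≥ Real.exp 1 for all i. Define, for a weight function w : Fin m → ℝ and θ ∈ {1/3, 2/3}, N_θ(w) as the minimum cardinality of a subset K ⊆ Fin m such that ∑_{i ∈ K} w i ≥ θ · ∑_i w i. Then N_{1/3}(fun i => Real.log (s i)) ≥ N_{1/3}(s) and N_{2/3}(fun i => Real.log (s i)) ≥ N_{2/3}(s); that is, both Nakamoto coefficients (for liveness and for safety) under the Logarithmic Stake Weight model are at least those under the linear stake-weight model. -/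
open Finset

lemma log_cross_le {a b : ℝ} (hb : Real.exp 1 ≤ b) (hab : b ≤ a) :
    Real.log a * b ≤ a * Real.log b := by
  have ha : Real.exp 1 ≤ a := hb.trans hab
  have hpos : (0:ℝ) < Real.exp 1 := Real.exp_pos 1
  have hbpos : 0 < b := lt_of_lt_of_le hpos hb
  have hapos : 0 < a := lt_of_lt_of_le hpos ha
  have h := Real.log_div_self_antitoneOn (by exact hb) (by exact ha) hab
  -- h : log a / a ≤ log b / b
  rw [div_le_div_iff₀ hapos hbpos] at h
  linarith

lemma nakamoto_mono (m : ℕ) (hm : 0 < m) (θ : ℝ) (hθ0 : 0 ≤ θ) (hθ1 : θ ≤ 1)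
    (s : Fin m → ℝ) (hs : ∀ i, Real.exp 1 ≤ s i) :
    nakamotoCoeff m θ s ≤ nakamotoCoeff m θ (fun i => Real.log (s i)) := by
  have h1e : (1:ℝ) ≤ Real.exp 1 := by
    have := Real.add_one_le_exp (1:ℝ); linarith
  have hs1 : ∀ i, (1:ℝ) ≤ s i := fun i => h1e.trans (hs i)
  have hspos : ∀ i, (0:ℝ) < s i := fun i => lt_of_lt_of_le one_pos (hs1 i)
  have hlog1 : ∀ i, (1:ℝ) ≤ Real.log (s i) := fun i =>
    (Real.le_log_iff_exp_le (hspos i)).2 (hs i)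
  -- total sums positive
  have hStot : (0:ℝ) < ∑ i, s i := Finset.sum_pos (fun i _ => hspos i) ⟨⟨0, hm⟩, mem_univ _⟩
  have hLtot : (0:ℝ) < ∑ i, Real.log (s i) :=
    Finset.sum_pos (fun i _ => lt_of_lt_of_le one_pos (hlog1 i)) ⟨⟨0, hm⟩, mem_univ _⟩
  -- the log set is nonempty, so sInf is attained
  have hne : {n : ℕ | ∃ K : Finset (Fin m), K.card = n ∧
      θ * ∑ i, Real.log (s i) ≤ ∑ i ∈ K, Real.log (s i)}.Nonempty := by
    refine ⟨m, Finset.univ, by simp, ?_⟩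
    nlinarith
  obtain ⟨K, hKcard, hKsum⟩ := Nat.sInf_mem hne
  set n := sInf {n : ℕ | ∃ K : Finset (Fin m), K.card = n ∧
      θ * ∑ i, Real.log (s i) ≤ ∑ i ∈ K, Real.log (s i)} with hn
  have hnm : n ≤ m := by
    rw [← hKcard]; simpa using Finset.card_le_univ K
  -- choose T of cardinality n maximizing the log-sum
  obtain ⟨T, hTmem, hTmax⟩ := Finset.exists_max_image
    ((Finset.univ : Finset (Fin m)).powersetCard n) (fun A => ∑ i ∈ A, Real.log (s i))
    (Finset.powersetCard_nonempty.2 (by simpa using hnm))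
  have hTcard : T.card = n := (Finset.mem_powersetCard.1 hTmem).2
  -- top property
  have htop : ∀ i ∈ T, ∀ j ∉ T, s j ≤ s i := by
    intro i hi j hj
    by_contra hlt
    push_neg at hlt
    have hT' : (insert j (T.erase i)) ∈ (Finset.univ : Finset (Fin m)).powersetCard n := by
      rw [Finset.mem_powersetCard]
      refine ⟨Finset.subset_univ _, ?_⟩
      rw [Finset.card_insert_of_notMem (fun h => hj (Finset.mem_of_mem_erase h)),
        Finset.card_erase_of_mem hi, hTcard]
      have hn1 : 1 ≤ T.card := Finset.card_pos.2 ⟨i, hi⟩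
      rw [hTcard] at hn1
      omega
    have h1 := hTmax _ hT'
    rw [Finset.sum_insert (fun h => hj (Finset.mem_of_mem_erase h)),
      Finset.sum_erase_eq_sub hi] at h1
    have : Real.log (s j) ≤ Real.log (s i) := by linarith
    exact absurd ((Real.log_le_log_iff (hspos j) (hspos i)).1 this) (not_le.2 hlt)
  -- T also meets the log threshold
  have hTlog : θ * ∑ i, Real.log (s i) ≤ ∑ i ∈ T, Real.log (s i) := by
    refine hKsum.trans (hTmax K ?_)
    rw [Finset.mem_powersetCard]; exact ⟨Finset.subset_univ _, hKcard⟩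
  -- cross inequality: (∑_T log) * (∑ s) ≤ (∑_T s) * (∑ log)
  have hcross : (∑ i ∈ T, Real.log (s i)) * (∑ i, s i)
      ≤ (∑ i ∈ T, s i) * (∑ i, Real.log (s i)) := by
    rw [← Finset.sum_add_sum_compl T (fun i => s i),
      ← Finset.sum_add_sum_compl T (fun i => Real.log (s i)), mul_add, mul_add]
    have hkey : (∑ i ∈ T, Real.log (s i)) * (∑ j ∈ Tᶜ, s j)
        ≤ (∑ i ∈ T, s i) * (∑ j ∈ Tᶜ, Real.log (s j)) := by
      rw [Finset.sum_mul_sum, Finset.sum_mul_sum]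
      refine Finset.sum_le_sum fun i hi => Finset.sum_le_sum fun j hj => ?_
      exact log_cross_le (hs j) (htop i hi j (Finset.mem_compl.1 hj))
    linarith
  -- conclude: T meets the linear threshold
  have hTlin : θ * ∑ i, s i ≤ ∑ i ∈ T, s i := by
    have h2 : θ * (∑ i, Real.log (s i)) * (∑ i, s i)
        ≤ (∑ i ∈ T, s i) * (∑ i, Real.log (s i)) := by
      calc θ * (∑ i, Real.log (s i)) * (∑ i, s i)
          ≤ (∑ i ∈ T, Real.log (s i)) * (∑ i, s i) := by
            exact mul_le_mul_of_nonneg_right hTlog hStot.le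
        _ ≤ _ := hcross
    nlinarith
  exact Nat.sInf_le ⟨T, hTcard, hTlin⟩

/-- Corollary 1: for stakes at least `e`, both Nakamoto coefficients (for liveness,
`θ = 1/3`, and for safety, `θ = 2/3`) under the Logarithmic Stake Weight model are at
least those under the linear stake-weight model. -/
theorem lsw_nakamoto_ge_linear (m : ℕ) (hm : 0 < m) (s : Fin m → ℝ)
    (hs : ∀ i, Real.exp 1 ≤ s i) :
    nakamotoCoeff m (1 / 3) s ≤ nakamotoCoeff m (1 / 3) (fun i => Real.log (s i)) ∧
      nakamotoCoeff m (2 / 3) s ≤ nakamotoCoeff m (2 / 3) (fun i => Real.log (s i)) := by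
  exact ⟨nakamoto_mono m hm _ (by norm_num) (by norm_num) s hs,
    nakamoto_mono m hm _ (by norm_num) (by norm_num) s hs⟩
end

section
/- Let m be a positive natural number and s : Fin m → ℝ with s i > 0 for all i. Define the Herfindahl-Hirschman Index of a positive weight function w : Fin m → ℝ as HHI(w) = ∑_{i} (w i / ∑_{j} w j)^2. Then HHI(fun i => Real.sqrt (s i)) ≤ HHI(s); that is, the HHI of the square-root stake weights is at most the HHI of the linear stake weights. -/
open Finset

/-- The Herfindahl-Hirschman Index of a weight function `w` on `m` validators:
the sum of squared normalized weights. -/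
noncomputable def hhi (m : ℕ) (w : Fin m → ℝ) : ℝ :=
  ∑ i, (w i / ∑ j, w j) ^ 2

/-- The HHI of the square-root stake weights is at most the HHI of the linear
stake weights. -/
theorem srsw_hhi_le (m : ℕ) (hm : 0 < m) (s : Fin m → ℝ) (hs : ∀ i, 0 < s i) :
    hhi m (fun i => Real.sqrt (s i)) ≤ hhi m s := by
  have hne : (univ : Finset (Fin m)).Nonempty := ⟨⟨0, hm⟩, mem_univ _⟩
  set A := ∑ j, Real.sqrt (s j) with hA
  set S := ∑ j, s j with hS
  set Q := ∑ j, s j ^ 2 with hQ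
  set T := ∑ j, Real.sqrt (s j) * s j with hT
  have hApos : 0 < A := Finset.sum_pos (fun i _ => Real.sqrt_pos.2 (hs i)) hne
  have hSpos : 0 < S := Finset.sum_pos (fun i _ => hs i) hne
  have hQpos : 0 < Q := Finset.sum_pos (fun i _ => pow_pos (hs i) 2) hne
  have h1 : S ^ 2 ≤ A * T := by
    have := Finset.sum_mul_sq_le_sq_mul_sq univ
      (fun i => Real.sqrt (Real.sqrt (s i)))
      (fun i => Real.sqrt (Real.sqrt (s i)) * Real.sqrt (s i))
    calc S ^ 2 = (∑ i, Real.sqrt (Real.sqrt (s i)) *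
          (Real.sqrt (Real.sqrt (s i)) * Real.sqrt (s i))) ^ 2 := by
          congr 1
          refine Finset.sum_congr rfl fun i _ => ?_
          rw [← mul_assoc, Real.mul_self_sqrt (Real.sqrt_nonneg _),
            Real.mul_self_sqrt (hs i).le]
      _ ≤ (∑ i, Real.sqrt (Real.sqrt (s i)) ^ 2) *
          ∑ i, (Real.sqrt (Real.sqrt (s i)) * Real.sqrt (s i)) ^ 2 := this
      _ = A * T := by
          congr 1
          · exact Finset.sum_congr rfl fun i _ => Real.sq_sqrt (Real.sqrt_nonneg _)
          · refine Finset.sum_congr rfl fun i _ => ?_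
            rw [mul_pow, Real.sq_sqrt (Real.sqrt_nonneg _), Real.sq_sqrt (hs i).le]
  have h2 : T ^ 2 ≤ S * Q := by
    have := Finset.sum_mul_sq_le_sq_mul_sq univ (fun i => Real.sqrt (s i)) s
    calc T ^ 2 ≤ (∑ i, Real.sqrt (s i) ^ 2) * ∑ i, s i ^ 2 := this
      _ = S * Q := by
          congr 1
          exact Finset.sum_congr rfl fun i _ => Real.sq_sqrt (hs i).le
  have key : S ^ 3 ≤ Q * A ^ 2 := by
    nlinarith [sq_nonneg T, mul_pos hApos hSpos]
  have hL : hhi m (fun i => Real.sqrt (s i)) = S / A ^ 2 := by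
    unfold hhi
    rw [← hA]
    rw [show (∑ i, (Real.sqrt (s i) / A) ^ 2) = ∑ i, s i / A ^ 2 from
      Finset.sum_congr rfl fun i _ => by rw [div_pow, Real.sq_sqrt (hs i).le],
      ← Finset.sum_div, ← hS]
  have hR : hhi m s = Q / S ^ 2 := by
    unfold hhi
    rw [← hS]
    rw [show (∑ i, (s i / S) ^ 2) = ∑ i, s i ^ 2 / S ^ 2 from
      Finset.sum_congr rfl fun i _ => by rw [div_pow],
      ← Finset.sum_div, ← hQ]
  rw [hL, hR, div_le_div_iff₀ (by positivity) (by positivity)]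
  nlinarith [key]
end

section
/- Let m be a positive natural number and s : Fin m → ℝ with s i ≥ Real.exp 1 for all i. Define the Herfindahl-Hirschman Index of a positive weight function w : Fin m → ℝ as HHI(w) = ∑_{i} (w i / ∑_{j} w j)^2. Then HHI(fun i => Real.log (s i)) ≤ HHI(s); that is, the HHI of the logarithmic stake weights is at most the HHI of the linear stake weights. -/
open Finset

lemma lsw_cross {u v : ℝ} (hu : Real.exp 1 ≤ u) (hv : Real.exp 1 ≤ v) (huv : u ≤ v) :
    Real.log v * u ≤ Real.log u * v := by
  have hu0 : 0 < u := lt_of_lt_of_le (Real.exp_pos 1) hu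
  have hv0 : 0 < v := lt_of_lt_of_le (Real.exp_pos 1) hv
  have h := Real.log_div_self_antitoneOn (by exact hu) (by exact hv) huv
  rw [div_le_div_iff₀ hv0 hu0] at h
  linarith

lemma lsw_step (m : ℕ) (s x : Fin m → ℝ) (hs : ∀ i, Real.exp 1 ≤ s i)
    (hx : ∀ i j, s i ≤ s j → x i ≤ x j) :
    (∑ i, x i * Real.log (s i)) * (∑ j, s j) ≤
      (∑ i, x i * s i) * (∑ j, Real.log (s j)) := by
  have key : ∀ i j : Fin m,
      x i * Real.log (s i) * s j + x j * Real.log (s j) * s i ≤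
        x i * s i * Real.log (s j) + x j * s j * Real.log (s i) := by
    intro i j
    rcases le_total (s i) (s j) with h | h
    · have h1 := hx i j h
      have h2 := lsw_cross (hs i) (hs j) h
      nlinarith
    · have h1 := hx j i h
      have h2 := lsw_cross (hs j) (hs i) h
      nlinarith
  have main : (∑ i, ∑ j, (x i * Real.log (s i) * s j + x j * Real.log (s j) * s i))
      ≤ ∑ i, ∑ j, (x i * s i * Real.log (s j) + x j * s j * Real.log (s i)) :=
    Finset.sum_le_sum fun i _ => Finset.sum_le_sum fun j _ => key i j
  simp only [Finset.sum_add_distrib] at main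
  have c1 : (∑ i : Fin m, ∑ j : Fin m, x j * Real.log (s j) * s i)
      = ∑ i : Fin m, ∑ j : Fin m, x i * Real.log (s i) * s j := Finset.sum_comm ..
  have c2 : (∑ i : Fin m, ∑ j : Fin m, x j * s j * Real.log (s i))
      = ∑ i : Fin m, ∑ j : Fin m, x i * s i * Real.log (s j) := Finset.sum_comm ..
  rw [c1, c2] at main
  have e1 : (∑ i, x i * Real.log (s i)) * (∑ j, s j)
      = ∑ i : Fin m, ∑ j : Fin m, x i * Real.log (s i) * s j := by
    rw [Finset.sum_mul]; exact Finset.sum_congr rfl fun i _ => Finset.mul_sum _ _ _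
  have e2 : (∑ i, x i * s i) * (∑ j, Real.log (s j))
      = ∑ i : Fin m, ∑ j : Fin m, x i * s i * Real.log (s j) := by
    rw [Finset.sum_mul]; exact Finset.sum_congr rfl fun i _ => Finset.mul_sum _ _ _
  rw [e1, e2]
  linarith

/-- For stakes at least `e`, the HHI of the logarithmic stake weights is at most
the HHI of the linear stake weights. -/
theorem lsw_hhi_le (m : ℕ) (hm : 0 < m) (s : Fin m → ℝ)
    (hs : ∀ i, Real.exp 1 ≤ s i) :
    hhi m (fun i => Real.log (s i)) ≤ hhi m s := by
  have he : (1:ℝ) ≤ Real.exp 1 := by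
    have := Real.add_one_le_exp (1:ℝ); linarith
  have hs0 : ∀ i, 0 < s i := fun i => lt_of_lt_of_le (Real.exp_pos 1) (hs i)
  have hl1 : ∀ i, 1 ≤ Real.log (s i) := by
    intro i
    calc (1:ℝ) = Real.log (Real.exp 1) := (Real.log_exp 1).symm
    _ ≤ Real.log (s i) := Real.log_le_log (Real.exp_pos 1) (hs i)
  set A := ∑ j, Real.log (s j) with hA
  set B := ∑ j, s j with hB
  have hApos : 0 < A := by
    have : (m:ℝ) ≤ A := by
      have := Finset.card_nsmul_le_sum Finset.univ (fun j => Real.log (s j)) 1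
        (fun i _ => hl1 i)
      simpa using this
    have hm' : (0:ℝ) < m := by exact_mod_cast hm
    linarith
  have hBpos : 0 < B := Finset.sum_pos (fun i _ => hs0 i) (Finset.univ_nonempty_iff.mpr ⟨⟨0, hm⟩⟩)
  have step1 := lsw_step m s (fun i => Real.log (s i)) hs
    (fun i j h => Real.log_le_log (hs0 i) h)
  have step2 := lsw_step m s s hs (fun i j h => h)
  -- step1 : (∑ log² ) * B ≤ (∑ log*s) * A ;  step2 : (∑ s*log) * B ≤ (∑ s²) * A
  have goal2 : (∑ i, Real.log (s i) ^ 2) * B ^ 2 ≤ (∑ i, s i ^ 2) * A ^ 2 := by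
    have s1 : (∑ i, Real.log (s i) ^ 2) * B ≤ (∑ i, Real.log (s i) * s i) * A := by
      simpa [pow_two] using step1
    have s2 : (∑ i, Real.log (s i) * s i) * B ≤ (∑ i, s i ^ 2) * A := by
      have := step2
      simpa [pow_two, mul_comm] using this
    nlinarith [s1, s2, hApos.le, hBpos.le,
      mul_le_mul_of_nonneg_right s1 hBpos.le, mul_le_mul_of_nonneg_right s2 hApos.le]
  unfold hhi
  rw [← hA]
  simp only [div_pow]
  rw [← Finset.sum_div, ← Finset.sum_div]
  rw [div_le_div_iff₀ (by positivity) (by positivity)]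
  calc (∑ i, Real.log (s i) ^ 2) * (∑ j, s j) ^ 2
      = (∑ i, Real.log (s i) ^ 2) * B ^ 2 := by rw [hB]
    _ ≤ (∑ i, s i ^ 2) * A ^ 2 := goal2
end

section
/- Let S be a positive real number, n a natural number with n ≥ 2, and C a real number. Then n · Real.sqrt (S / n) = Real.sqrt n · Real.sqrt S, and if C ≥ (Real.sqrt n − 1) / (n − 1) · Real.sqrt S, then Real.sqrt S ≥ n · Real.sqrt (S / n) − (n − 1) · C. -/
/-- Sybil cost bound for SRSW: splitting a stake `S` equally into `n` identities yields
total weight `n · √(S/n) = √n · √S`, and if the Sybil cost `C` satisfies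
`C ≥ (√n − 1)/(n − 1) · √S`, then a single identity is at least as rewarding as
splitting into `n` identities. -/
theorem srsw_sybil_cost_bound (S : ℝ) (hS : 0 < S) (n : ℕ) (hn : 2 ≤ n) (C : ℝ) :
    (n : ℝ) * Real.sqrt (S / n) = Real.sqrt n * Real.sqrt S ∧
      ((Real.sqrt n - 1) / ((n : ℝ) - 1) * Real.sqrt S ≤ C →
        (n : ℝ) * Real.sqrt (S / n) - ((n : ℝ) - 1) * C ≤ Real.sqrt S) := by
  have hn0 : (0 : ℝ) < n := by positivity
  have hn1 : (1 : ℝ) < n := by exact_mod_cast lt_of_lt_of_le one_lt_two (by exact_mod_cast hn)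
  have hsn : Real.sqrt n ≠ 0 := by
    positivity
  have heq : (n : ℝ) * Real.sqrt (S / n) = Real.sqrt n * Real.sqrt S := by
    have hnn : Real.sqrt n * Real.sqrt n = n := Real.mul_self_sqrt hn0.le
    rw [Real.sqrt_div hS.le]
    field_simp
    nlinarith [Real.sqrt_nonneg S]
  refine ⟨heq, fun hC => ?_⟩
  have h1 : ((n:ℝ) - 1) * ((Real.sqrt n - 1) / ((n : ℝ) - 1) * Real.sqrt S) ≤ ((n:ℝ)-1) * C :=
    mul_le_mul_of_nonneg_left hC (by linarith)
  have hne : (n:ℝ) - 1 ≠ 0 := by linarith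
  have h2 : ((n:ℝ) - 1) * ((Real.sqrt n - 1) / ((n : ℝ) - 1) * Real.sqrt S)
      = (Real.sqrt n - 1) * Real.sqrt S := by field_simp
  rw [heq]
  nlinarith [Real.sqrt_nonneg S]
end
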